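/- Let r ≥ 2, let H be an r-uniform hypergraph on vertex set [n] with maximum degree Δ, and let p ∈ (0,1). Define ψ(F) = (p^{-1}−1)^{e(F)} · (4·(r−1)!·Δ)^{r(F)} · e^{r(F)+(r−2)·k_r(F)} / n^{r(F)+(r−2)·k_r(F)} and T''_H = Σ''_{F⊆H} ψ(F), where Σ'' runs over all connected good spanning subhypergraphs F of H. Then T''_H ≤ n·e^{2r} · Σ_{s=r+1}^{n} (12·(r!)²·Δ²/n)^{s−1} · p^{−e_H(s)}. -/

import Mathlib

open Finset Filter Asymptotics
open scoped Classical

def maxDeg {V : Type*} [Fintype V] [DecidableEq V] (H : Finset (Finset V)) : ℕ :=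
  Finset.univ.sup (fun v => (H.filter (fun e => v ∈ e)).card)

def UniformH {V : Type*} (r : ℕ) (H : Finset (Finset V)) : Prop := ∀ e ∈ H, e.card = r

def eHmax {n : ℕ} (H : Finset (Finset (Fin n))) (v : ℕ) : ℕ :=
  (Finset.powersetCard v (Finset.univ : Finset (Fin n))).sup
    (fun W => (H.filter (fun e => e ⊆ W)).card)

def hAdj {n : ℕ} (F : Finset (Finset (Fin n))) (u v : Fin n) : Prop :=
  ∃ e ∈ F, u ∈ e ∧ v ∈ e

noncomputable def k1 {n : ℕ} (F : Finset (Finset (Fin n))) : ℕ :=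
  (Finset.univ.filter (fun v : Fin n => ∀ e ∈ F, v ∉ e)).card

noncomputable def krC {n : ℕ} (F : Finset (Finset (Fin n))) : ℕ :=
  ((Finset.univ.filter (fun v : Fin n => ∃ e ∈ F, v ∈ e)).image
    (fun v => Finset.univ.filter (fun w => Relation.ReflTransGen (hAdj F) v w))).card

noncomputable def rpar {n : ℕ} (r : ℕ) (F : Finset (Finset (Fin n))) : ℕ :=
  n - k1 F - (r - 1) * krC F

def Good {n : ℕ} (F : Finset (Finset (Fin n))) : Prop :=
  ∀ e ∈ F, ∃ f ∈ F, f ≠ e ∧ (e ∩ f).Nonempty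

section Count

variable {n : ℕ}

/-- BFS existence: a connected set `W` of size `m+1` admits an ordering with
nondecreasing parent pointers. -/
lemma bfs_exists (N : Fin n → Finset (Fin n)) (W : Finset (Fin n)) (m : ℕ)
    (hW : W.card = m + 1)
    (hconn : ∀ x ∈ W, ∀ y ∈ W, Relation.ReflTransGen (fun a b => b ∈ W ∧ b ∈ N a) x y) :
    ∃ (w : ℕ → Fin n) (p : ℕ → ℕ),
      ((Finset.range (m+1)).image w = W) ∧
      (∀ i j, i < m + 1 → j < m + 1 → w i = w j → i = j) ∧
      (∀ i j, i ≤ j → j < m → p i ≤ p j) ∧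
      (∀ i, i < m → p i ≤ i ∧ w (i + 1) ∈ N (w (p i))) := by
  have hWne : W.Nonempty := by rw [← Finset.card_pos, hW]; omega
  obtain ⟨w₀, hw₀⟩ := hWne
  have main : ∀ j, j ≤ m → ∃ (l : List (Fin n)) (pl : List ℕ),
      l.length = j + 1 ∧ l.Nodup ∧ l.toFinset ⊆ W ∧ pl.length = j ∧
      (∀ i k, i ≤ k → k < j → pl.getD i 0 ≤ pl.getD k 0) ∧
      (∀ i, i < j → pl.getD i 0 ≤ i ∧ l.getD (i+1) w₀ ∈ N (l.getD (pl.getD i 0) w₀)) ∧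
      (∀ x ∈ W, x ∉ l.toFinset → ∀ q, q < pl.getD (j-1) 0 → x ∉ N (l.getD q w₀)) := by
    intro j
    induction j with
    | zero =>
      intro _
      refine ⟨[w₀], [], by simp, by simp, ?_, by simp, by omega, by omega, by simp⟩
      intro x hx
      simp only [List.toFinset_cons, List.toFinset_nil, insert_empty_eq, mem_singleton] at hx
      simpa [hx] using hw₀
    | succ j ih =>
      intro hj
      obtain ⟨l, pl, hlen, hnd, hsub, hplen, hsort, hpar, hfr⟩ := ih (by omega)
      have hcardl : l.toFinset.card = j + 1 := by
        rw [List.toFinset_card_of_nodup hnd, hlen]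
      -- there is an unvisited vertex
      have hu : (W \ l.toFinset).Nonempty := by
        rw [← Finset.card_pos, Finset.card_sdiff_of_subset hsub, hW, hcardl]
        omega
      obtain ⟨u, hu'⟩ := hu
      have huW : u ∈ W := (Finset.mem_sdiff.1 hu').1
      have hul : u ∉ l.toFinset := (Finset.mem_sdiff.1 hu').2
      -- a starting visited vertex
      have hlne : l ≠ [] := by
        intro h; rw [h] at hlen; simp at hlen
      have hy₀mem : l.getD 0 w₀ ∈ l.toFinset := by
        rw [List.mem_toFinset, List.getD_eq_getElem l w₀ (by rw [hlen]; omega)]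
        exact List.getElem_mem _
      have hy₀W : l.getD 0 w₀ ∈ W := hsub hy₀mem
      -- boundary vertex exists
      have hbound : ∃ x ∈ W, x ∉ l.toFinset ∧ ∃ q, q < l.length ∧ x ∈ N (l.getD q w₀) := by
        have key : ∀ z, Relation.ReflTransGen (fun a b => b ∈ W ∧ b ∈ N a) (l.getD 0 w₀) z →
            z ∈ l.toFinset ∨ ∃ x ∈ W, x ∉ l.toFinset ∧ ∃ q, q < l.length ∧ x ∈ N (l.getD q w₀) := by
          intro z hz
          induction hz with
          | refl => exact Or.inl hy₀mem
          | @tail b c hab hbc ihz =>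
            rcases ihz with h1 | h1
            · by_cases hc : c ∈ l.toFinset
              · exact Or.inl hc
              · refine Or.inr ⟨c, hbc.1, hc, ?_⟩
                have hb : b ∈ l := List.mem_toFinset.1 h1
                obtain ⟨q, hq, hqb⟩ := List.mem_iff_getElem.1 hb
                exact ⟨q, hq, by rw [List.getD_eq_getElem l w₀ hq, hqb]; exact hbc.2⟩
            · exact Or.inr h1
        rcases key u (hconn _ hy₀W u huW) with h | h
        · exact absurd h hul
        · exact h
      -- minimal frontier index
      set I : Finset ℕ := (Finset.range l.length).filter
        (fun q => ∃ x ∈ W, x ∉ l.toFinset ∧ x ∈ N (l.getD q w₀)) with hI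
      have hIne : I.Nonempty := by
        obtain ⟨x, hxW, hxl, q, hq, hxN⟩ := hbound
        exact ⟨q, by rw [hI, Finset.mem_filter, Finset.mem_range]; exact ⟨hq, x, hxW, hxl, hxN⟩⟩
      set q' := I.min' hIne with hq'
      have hq'I : q' ∈ I := I.min'_mem hIne
      have hq'lt : q' < l.length := Finset.mem_range.1 (Finset.mem_filter.1 hq'I).1
      obtain ⟨xs, hxsW, hxsl, hxsN⟩ := (Finset.mem_filter.1 hq'I).2
      have hmin : ∀ q ∈ I, q' ≤ q := fun q hq => I.min'_le q hq
      -- monotone step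
      have hlast : pl.getD (j-1) 0 ≤ q' := by
        by_contra hcon
        exact (hfr xs hxsW hxsl q' (by omega)) hxsN
      refine ⟨l ++ [xs], pl ++ [q'], ?_, ?_, ?_, ?_, ?_, ?_, ?_⟩
      · simp [hlen]
      · rw [List.nodup_append]
        exact ⟨hnd, List.nodup_singleton xs, by
          intro a ha b hb hamem
          simp only [List.mem_singleton] at hb
          subst hb
          exact hxsl (List.mem_toFinset.2 (hamem ▸ ha))⟩
      · intro a ha
        rw [List.toFinset_append] at ha
        rcases Finset.mem_union.1 ha with h | h
        · exact hsub h
        · simp only [List.toFinset_cons, List.toFinset_nil, insert_empty_eq,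
            Finset.mem_singleton] at h
          rw [h]; exact hxsW
      · simp [hplen]
      · -- sortedness
        intro i k hik hk
        have hgd : ∀ a, a < j → (pl ++ [q']).getD a 0 = pl.getD a 0 := by
          intro a ha; exact List.getD_append _ _ _ _ (by omega)
        have hgdj : (pl ++ [q']).getD j 0 = q' := by
          rw [List.getD_append_right _ _ _ _ (by omega)]
          simp [hplen]
        by_cases hkj : k < j
        · rw [hgd i (by omega), hgd k hkj]
          exact hsort i k hik hkj
        · have hkj' : k = j := by omega
          rw [hkj', hgdj]
          rcases Nat.lt_or_ge i j with hij | hij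
          · rw [hgd i hij]
            have h1 : pl.getD i 0 ≤ pl.getD (j-1) 0 := by
              rcases Nat.lt_or_ge i (j-1) with h | h
              · exact hsort i (j-1) (by omega) (by omega)
              · have hieq : i = j - 1 := by omega
                rw [hieq]
            exact le_trans h1 hlast
          · have hieq : i = j := by omega
            rw [hieq, hgdj]
      · -- parent properties
        intro i hi
        have hgd : ∀ a, a < j → (pl ++ [q']).getD a 0 = pl.getD a 0 := by
          intro a ha; exact List.getD_append _ _ _ _ (by omega)
        have hgdj : (pl ++ [q']).getD j 0 = q' := by
          rw [List.getD_append_right _ _ _ _ (by omega)]; simp [hplen]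
        have hgl : ∀ a, a < l.length → (l ++ [xs]).getD a w₀ = l.getD a w₀ := by
          intro a ha; exact List.getD_append _ _ _ _ ha
        have hglast : (l ++ [xs]).getD (j+1) w₀ = xs := by
          rw [List.getD_append_right _ _ _ _ (by omega)]; simp [hlen]
        by_cases hij : i < j
        · obtain ⟨h1, h2⟩ := hpar i hij
          refine ⟨by rw [hgd i hij]; exact h1, ?_⟩
          rw [hgd i hij, hgl (i+1) (by omega), hgl (pl.getD i 0) (by omega)]
          exact h2
        · have hieq : i = j := by omega
          rw [hieq]
          refine ⟨by rw [hgdj]; omega, ?_⟩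
          rw [hgdj, hglast, hgl q' hq'lt]
          exact hxsN
      · -- frontier invariant
        intro x hxW hxl q hq
        have hgdj : (pl ++ [q']).getD ((j+1)-1) 0 = q' := by
          simp only [Nat.add_sub_cancel]
          rw [List.getD_append_right _ _ _ _ (by omega)]; simp [hplen]
        rw [hgdj] at hq
        have hxl' : x ∉ l.toFinset := by
          intro hmem; exact hxl (by rw [List.toFinset_append]; exact Finset.mem_union_left _ hmem)
        have hgl : (l ++ [xs]).getD q w₀ = l.getD q w₀ :=
          List.getD_append _ _ _ _ (by omega)
        rw [hgl]
        intro hxN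
        have : q ∈ I := by
          rw [hI, Finset.mem_filter, Finset.mem_range]
          exact ⟨by omega, x, hxW, hxl', hxN⟩
        exact absurd (hmin q this) (by omega)
  obtain ⟨l, pl, hlen, hnd, hsub, hplen, hsort, hpar, _⟩ := main m le_rfl
  have hto : l.toFinset = W := by
    apply Finset.eq_of_subset_of_card_le hsub
    rw [List.toFinset_card_of_nodup hnd, hlen, hW]
  refine ⟨fun i => l.getD i w₀, fun i => pl.getD i 0, ?_, ?_, ?_, ?_⟩
  · rw [← hto]
    ext a
    simp only [Finset.mem_image, Finset.mem_range, List.mem_toFinset]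
    constructor
    · rintro ⟨i, hi, rfl⟩
      rw [List.getD_eq_getElem l w₀ (by omega)]
      exact List.getElem_mem _
    · intro ha
      obtain ⟨i, hi, hia⟩ := List.mem_iff_getElem.1 ha
      exact ⟨i, by omega, by rw [List.getD_eq_getElem l w₀ hi]; exact hia⟩
  · intro i j hi hj hij
    have hij' : l.getD i w₀ = l.getD j w₀ := hij
    rw [List.getD_eq_getElem l w₀ (show i < l.length by omega)] at hij'
    rw [List.getD_eq_getElem l w₀ (show j < l.length by omega)] at hij'
    exact (List.Nodup.getElem_inj_iff hnd).1 hij'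
  · intro i j hij hj
    exact hsort i j hij hj
  · intro i hi
    exact hpar i hi



/-- Iteratively build the vertex list from a code. -/
def buildL (nL : Fin n → List (Fin n)) (v₀ : Fin n) (π k : ℕ → ℕ) : ℕ → List (Fin n)
  | 0 => [v₀]
  | (i+1) => buildL nL v₀ π k i ++
      [(nL ((buildL nL v₀ π k i).getD (π i) v₀)).getD (k i) v₀]

noncomputable def decodeC (nL : Fin n → List (Fin n)) (m d : ℕ)
    (c : Fin n × (Fin m → Fin m) × (Fin m → Fin d)) : Finset (Fin n) :=
  (buildL nL c.1 (fun i => if h : i < m then (c.2.1 ⟨i, h⟩ : ℕ) else 0)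
      (fun i => if h : i < m then (c.2.2 ⟨i, h⟩ : ℕ) else 0) m).toFinset

/-- The number of monotone functions `Fin m → Fin m` is at most `4 ^ m`. -/
lemma card_monotone_le (m : ℕ) :
    ((Finset.univ : Finset (Fin m → Fin m)).filter (fun f => Monotone f)).card ≤ 4 ^ m := by
  classical
  have h1 : ((Finset.univ : Finset (Fin m → Fin m)).filter (fun f => Monotone f)).card
      ≤ ((Finset.range (2*m)).powersetCard m).card := by
    apply Finset.card_le_card_of_injOn
      (fun f => (Finset.univ : Finset (Fin m)).image (fun i : Fin m => (f i : ℕ) + (i : ℕ)))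
    · intro f hf
      have hmono : Monotone f := (Finset.mem_filter.1 hf).2
      have hsm : StrictMono (fun i : Fin m => (f i : ℕ) + (i : ℕ)) := by
        intro i j hij
        have h2 : (i : ℕ) < j := hij
        have h3 : (f i : ℕ) ≤ f j := hmono hij.le
        show (f i : ℕ) + (i : ℕ) < (f j : ℕ) + (j : ℕ)
        omega
      rw [Finset.mem_coe, Finset.mem_powersetCard]
      constructor
      · intro x hx
        simp only [Finset.mem_image, Finset.mem_univ, true_and] at hx
        obtain ⟨i, rfl⟩ := hx
        rw [Finset.mem_range]
        have : (f i : ℕ) < m := (f i).2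
        have : (i : ℕ) < m := i.2
        omega
      · rw [Finset.card_image_of_injective _ hsm.injective, Finset.card_univ,
          Fintype.card_fin]
    · intro f hf g hg hfg
      simp only [Finset.coe_filter, Set.mem_setOf_eq] at hf hg
      have hfm : Monotone f := hf.2
      have hgm : Monotone g := hg.2
      have hsf : StrictMono (fun i : Fin m => (f i : ℕ) + (i : ℕ)) := by
        intro i j hij
        have h3 : (f i : ℕ) ≤ f j := hfm hij.le
        have h2 : (i : ℕ) < j := hij
        show (f i : ℕ) + (i : ℕ) < (f j : ℕ) + (j : ℕ)
        omega
      have hsg : StrictMono (fun i : Fin m => (g i : ℕ) + (i : ℕ)) := by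
        intro i j hij
        have h3 : (g i : ℕ) ≤ g j := hgm hij.le
        have h2 : (i : ℕ) < j := hij
        show (g i : ℕ) + (i : ℕ) < (g j : ℕ) + (j : ℕ)
        omega
      set s := (Finset.univ : Finset (Fin m)).image (fun i : Fin m => (f i : ℕ) + (i : ℕ)) with hs
      have hcard : s.card = m := by
        rw [hs, Finset.card_image_of_injective _ hsf.injective, Finset.card_univ,
          Fintype.card_fin]
      have hfmem : ∀ x : Fin m, (f x : ℕ) + (x : ℕ) ∈ s := by
        intro x; rw [hs]; exact Finset.mem_image_of_mem _ (Finset.mem_univ x)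
      have hfg' : (Finset.univ : Finset (Fin m)).image (fun i : Fin m => (f i : ℕ) + (i : ℕ))
          = (Finset.univ : Finset (Fin m)).image (fun i : Fin m => (g i : ℕ) + (i : ℕ)) := hfg
      have hgmem : ∀ x : Fin m, (g x : ℕ) + (x : ℕ) ∈ s := by
        intro x; rw [hs, hfg']; exact Finset.mem_image_of_mem _ (Finset.mem_univ x)
      have h4 := Finset.orderEmbOfFin_unique hcard hfmem hsf
      have h5 := Finset.orderEmbOfFin_unique hcard hgmem hsg
      funext i
      have heq : (f i : ℕ) + (i : ℕ) = (g i : ℕ) + (i : ℕ) := by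
        have := congrFun (h4.trans h5.symm) i
        simpa using this
      exact Fin.ext (by omega)
  refine h1.trans ?_
  rw [Finset.card_powersetCard, Finset.card_range]
  calc (2*m).choose m ≤ ∑ i ∈ Finset.range (2*m+1), (2*m).choose i := by
        apply Finset.single_le_sum (fun i _ => Nat.zero_le _)
        rw [Finset.mem_range]; omega
    _ = 2 ^ (2*m) := Nat.sum_range_choose (2*m)
    _ = 4 ^ m := by rw [show (4:ℕ) = 2^2 from rfl, ← pow_mul]

/-- Counting connected vertex sets. -/
lemma card_conn_le (N : Fin n → Finset (Fin n)) (d m : ℕ) (hd : ∀ v, (N v).card ≤ d)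
    (𝒞 : Finset (Finset (Fin n)))
    (h𝒞 : ∀ W ∈ 𝒞, W.card = m + 1 ∧
      ∀ x ∈ W, ∀ y ∈ W, Relation.ReflTransGen (fun a b => b ∈ W ∧ b ∈ N a) x y) :
    𝒞.card ≤ n * (4 ^ m * d ^ m) := by
  classical
  set nL : Fin n → List (Fin n) := fun v => (N v).sort (· ≤ ·) with hnL
  set codes := ((Finset.univ : Finset (Fin n)) ×ˢ
    (((Finset.univ : Finset (Fin m → Fin m)).filter (fun f => Monotone f)) ×ˢ
      (Finset.univ : Finset (Fin m → Fin d)))) with hcodes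
  have hsub : 𝒞 ⊆ codes.image (decodeC nL m d) := by
    intro W hW
    obtain ⟨hWcard, hconn⟩ := h𝒞 W hW
    obtain ⟨w, p, himg, hinj, hmono, hpar⟩ := bfs_exists N W m hWcard hconn
    have hkidx : ∀ i : Fin m, (nL (w (p i))).idxOf (w (i+1)) < d := by
      intro i
      have hmem : w (i+1) ∈ nL (w (p i)) := by
        rw [hnL]
        simp only [Finset.mem_sort]
        exact (hpar i i.2).2
      calc (nL (w (p i))).idxOf (w (i+1)) < (nL (w (p i))).length :=
            List.idxOf_lt_length_of_mem hmem
        _ ≤ d := by rw [hnL]; simp only [Finset.length_sort]; exact hd _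
    set π : Fin m → Fin m := fun i => ⟨p i, by have := (hpar i i.2).1; omega⟩ with hπ
    set k : Fin m → Fin d := fun i => ⟨(nL (w (p i))).idxOf (w (i+1)), hkidx i⟩ with hk
    rw [Finset.mem_image]
    refine ⟨⟨w 0, π, k⟩, ?_, ?_⟩
    · rw [hcodes]
      simp only [Finset.mem_product, Finset.mem_univ, Finset.mem_filter, true_and,
        and_true]
      intro i j hij
      show π i ≤ π j
      rw [hπ]
      exact Fin.mk_le_mk.2 (hmono i j hij (j.2))
    · -- decode correctness
      have hbuild : ∀ t, t ≤ m →
          buildL nL (w 0) (fun i => if h : i < m then ((π ⟨i, h⟩ : Fin m) : ℕ) else 0)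
            (fun i => if h : i < m then ((k ⟨i, h⟩ : Fin d) : ℕ) else 0) t
          = (List.range (t+1)).map w := by
        intro t
        induction t with
        | zero => intro _; simp [buildL, List.range_succ]
        | succ t iht =>
          intro ht
          have hB := iht (by omega)
          rw [buildL, hB]
          have hgetw : ∀ a, a < t + 1 → ((List.range (t+1)).map w).getD a (w 0) = w a := by
            intro a ha
            rw [List.getD_eq_getElem _ _ (by simp; omega)]
            simp
          have hπt : (if h : t < m then ((π ⟨t, h⟩ : Fin m) : ℕ) else 0) = p t := by
            rw [dif_pos (show t < m by omega)]
          have hkt : (if h : t < m then ((k ⟨t, h⟩ : Fin d) : ℕ) else 0)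
              = (nL (w (p t))).idxOf (w (t+1)) := by
            rw [dif_pos (show t < m by omega)]
          rw [hπt, hkt, hgetw (p t) (by have := (hpar t (by omega)).1; omega)]
          have hmem : w (t+1) ∈ nL (w (p t)) := by
            rw [hnL]; simp only [Finset.mem_sort]; exact (hpar t (by omega)).2
          have hidx : (nL (w (p t))).idxOf (w (t+1)) < (nL (w (p t))).length :=
            List.idxOf_lt_length_of_mem hmem
          rw [List.getD_eq_getElem _ _ hidx, List.getElem_idxOf hidx]
          simp [List.range_succ]
      show decodeC nL m d ⟨w 0, π, k⟩ = W
      rw [decodeC]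
      simp only
      rw [hbuild m le_rfl, ← himg]
      ext a
      simp only [List.mem_toFinset, List.mem_map, List.mem_range, Finset.mem_image,
        Finset.mem_range]
  calc 𝒞.card ≤ (codes.image (decodeC nL m d)).card := Finset.card_le_card hsub
    _ ≤ codes.card := Finset.card_image_le
    _ ≤ n * (4 ^ m * d ^ m) := by
      rw [hcodes, Finset.card_product, Finset.card_product, Finset.card_univ,
        Fintype.card_fin, Finset.card_univ, Fintype.card_fun, Fintype.card_fin,
        Fintype.card_fin]
      exact Nat.mul_le_mul_left n (Nat.mul_le_mul_right _ (card_monotone_le m))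

end Count


noncomputable def supp {n : ℕ} (F : Finset (Finset (Fin n))) : Finset (Fin n) :=
  Finset.univ.filter (fun v : Fin n => ∃ e ∈ F, v ∈ e)

lemma k1_add_supp {n : ℕ} (F : Finset (Finset (Fin n))) : k1 F + (supp F).card = n := by
  classical
  have h := Finset.card_filter_add_card_filter_not
    (s := (Finset.univ : Finset (Fin n))) (p := fun v => ∀ e ∈ F, v ∉ e)
  have h2 : (Finset.univ.filter (fun v : Fin n => ¬ ∀ e ∈ F, v ∉ e)) = supp F := by
    ext v
    simp only [Finset.mem_filter, Finset.mem_univ, true_and, supp]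
    push_neg
    rfl
  rw [h2] at h
  rw [k1]
  rw [h]
  simp

lemma supp_nonempty_of_krC {n : ℕ} (F : Finset (Finset (Fin n))) (hk : krC F = 1) :
    (supp F).Nonempty := by
  obtain ⟨C, hC⟩ := Finset.card_eq_one.1 hk
  have : ((supp F).image
      (fun v => Finset.univ.filter (fun w => Relation.ReflTransGen (hAdj F) v w))).Nonempty := by
    rw [show (supp F).image
        (fun v => Finset.univ.filter (fun w => Relation.ReflTransGen (hAdj F) v w)) = {C} from hC]
    exact Finset.singleton_nonempty C
  exact Finset.image_nonempty.1 this

lemma supp_conn {n : ℕ} (F : Finset (Finset (Fin n))) (hk : krC F = 1) :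
    ∀ x ∈ supp F, ∀ y ∈ supp F, Relation.ReflTransGen (hAdj F) x y := by
  obtain ⟨C, hC⟩ := Finset.card_eq_one.1 hk
  have hC' : ∀ v ∈ supp F,
      Finset.univ.filter (fun w => Relation.ReflTransGen (hAdj F) v w) = C := by
    intro v hv
    have := Finset.mem_image_of_mem
      (fun v => Finset.univ.filter (fun w => Relation.ReflTransGen (hAdj F) v w)) hv
    rw [show (supp F).image
        (fun v => Finset.univ.filter (fun w => Relation.ReflTransGen (hAdj F) v w)) = {C} from hC]
      at this
    exact Finset.mem_singleton.1 this
  intro x hx y hy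
  have hyy : y ∈ Finset.univ.filter (fun w => Relation.ReflTransGen (hAdj F) y w) :=
    Finset.mem_filter.2 ⟨Finset.mem_univ y, Relation.ReflTransGen.refl⟩
  rw [hC' y hy, ← hC' x hx] at hyy
  exact (Finset.mem_filter.1 hyy).2

lemma hAdj_mem_supp {n : ℕ} {F : Finset (Finset (Fin n))} {a b : Fin n} (h : hAdj F a b) :
    a ∈ supp F ∧ b ∈ supp F := by
  obtain ⟨e, he, ha, hb⟩ := h
  exact ⟨Finset.mem_filter.2 ⟨Finset.mem_univ a, e, he, ha⟩,
    Finset.mem_filter.2 ⟨Finset.mem_univ b, e, he, hb⟩⟩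

lemma supp_conn' {n : ℕ} (H F : Finset (Finset (Fin n))) (hFH : F ⊆ H) (hk : krC F = 1) :
    ∀ x ∈ supp F, ∀ y ∈ supp F,
      Relation.ReflTransGen (fun a b => b ∈ supp F ∧
        b ∈ Finset.univ.filter (fun u => u ≠ a ∧ hAdj H a u)) x y := by
  intro x hx y hy
  have h0 := supp_conn F hk x hx y hy
  induction h0 with
  | refl => exact Relation.ReflTransGen.refl
  | @tail b c hab hbc ih =>
    have ihb := ih (hAdj_mem_supp hbc).1
    by_cases hbc' : b = c
    · rw [← hbc']; exact ihb
    · refine ihb.tail ⟨(hAdj_mem_supp hbc).2, ?_⟩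
      refine Finset.mem_filter.2 ⟨Finset.mem_univ c, fun h => hbc' h.symm, ?_⟩
      obtain ⟨e, he, hbe, hce⟩ := hbc
      exact ⟨e, hFH he, hbe, hce⟩

lemma NH_card_le {n r Δ : ℕ} (H : Finset (Finset (Fin n))) (hunif : UniformH r H)
    (hΔ : maxDeg H ≤ Δ) (v : Fin n) :
    (Finset.univ.filter (fun u => u ≠ v ∧ hAdj H v u)).card ≤ (r - 1) * Δ := by
  classical
  have hsub : (Finset.univ.filter (fun u => u ≠ v ∧ hAdj H v u)) ⊆
      (H.filter (fun e => v ∈ e)).biUnion (fun e => e.erase v) := by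
    intro u hu
    obtain ⟨-, hne, e, he, hv', hu'⟩ := Finset.mem_filter.1 hu
    exact Finset.mem_biUnion.2 ⟨e, Finset.mem_filter.2 ⟨he, hv'⟩,
      Finset.mem_erase.2 ⟨hne, hu'⟩⟩
  calc (Finset.univ.filter (fun u => u ≠ v ∧ hAdj H v u)).card
      ≤ ((H.filter (fun e => v ∈ e)).biUnion (fun e => e.erase v)).card :=
        Finset.card_le_card hsub
    _ ≤ ∑ e ∈ H.filter (fun e => v ∈ e), (e.erase v).card := Finset.card_biUnion_le
    _ ≤ ∑ _e ∈ H.filter (fun e => v ∈ e), (r - 1) := by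
        apply Finset.sum_le_sum
        intro e he
        obtain ⟨heH, hve⟩ := Finset.mem_filter.1 he
        rw [Finset.card_erase_of_mem hve, hunif e heH]
    _ = (H.filter (fun e => v ∈ e)).card * (r - 1) := by
        rw [Finset.sum_const, smul_eq_mul]
    _ ≤ Δ * (r - 1) := by
        apply Nat.mul_le_mul_right
        have h1 : (H.filter (fun e => v ∈ e)).card ≤ maxDeg H :=
          Finset.le_sup (f := fun v => (H.filter (fun e => v ∈ e)).card) (Finset.mem_univ v)
        exact le_trans h1 hΔ
    _ = (r - 1) * Δ := Nat.mul_comm _ _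

lemma supp_card_ge {n r : ℕ} (H F : Finset (Finset (Fin n))) (hunif : UniformH r H)
    (hFH : F ⊆ H) (hgood : Good F) (hk : krC F = 1) : r + 1 ≤ (supp F).card := by
  classical
  obtain ⟨v, hv⟩ := supp_nonempty_of_krC F hk
  obtain ⟨-, e, he, hve⟩ := Finset.mem_filter.1 hv
  obtain ⟨f, hf, hfe, -⟩ := hgood e he
  have hce : e.card = r := hunif e (hFH he)
  have hcf : f.card = r := hunif f (hFH hf)
  have hnotsub : ¬ f ⊆ e := by
    intro hsub
    exact hfe (Finset.eq_of_subset_of_card_le hsub (by omega))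
  obtain ⟨x, hxf, hxe⟩ := Finset.not_subset.1 hnotsub
  have hsubsupp : insert x e ⊆ supp F := by
    intro a ha
    rcases Finset.mem_insert.1 ha with h | h
    · exact Finset.mem_filter.2 ⟨Finset.mem_univ a, f, hf, h ▸ hxf⟩
    · exact Finset.mem_filter.2 ⟨Finset.mem_univ a, e, he, h⟩
  calc r + 1 = (insert x e).card := by rw [Finset.card_insert_of_notMem hxe, hce]
    _ ≤ (supp F).card := Finset.card_le_card hsubsupp

lemma sum_pow_card {α : Type*} [DecidableEq α] (A : Finset α) (x : ℝ) :
    ∑ F ∈ A.powerset, x ^ F.card = (1 + x) ^ A.card := by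
  induction A using Finset.induction_on with
  | empty => simp
  | @insert a A ha ih =>
    rw [Finset.sum_powerset_insert ha, ih, Finset.card_insert_of_notMem ha]
    have h2 : ∑ t ∈ A.powerset, x ^ (insert a t).card = ∑ t ∈ A.powerset, x * x ^ t.card := by
      apply Finset.sum_congr rfl
      intro t ht
      rw [Finset.card_insert_of_notMem (fun hat => ha (Finset.mem_powerset.1 ht hat))]
      ring
    rw [h2, ← Finset.mul_sum, ih]
    ring

lemma nat_core {r : ℕ} (hr : 2 ≤ r) :
    4 * ((r - 1) * (r - 1).factorial) ≤ r.factorial ^ 2 := by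
  have a : r - 1 ≤ (r - 1).factorial := Nat.self_le_factorial _
  have b : r * (r - 1).factorial = r.factorial := Nat.mul_factorial_pred (by omega)
  calc 4 * ((r - 1) * (r - 1).factorial)
      ≤ 4 * ((r - 1).factorial * (r - 1).factorial) :=
        Nat.mul_le_mul_left _ (Nat.mul_le_mul_right _ a)
    _ ≤ (r * r) * ((r - 1).factorial * (r - 1).factorial) :=
        Nat.mul_le_mul_right _ (by nlinarith)
    _ = (r * (r - 1).factorial) * (r * (r - 1).factorial) := by ring
    _ = r.factorial ^ 2 := by rw [b]; ring


theorem Tsecond_bound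
    (r n Δ : ℕ) (hr : 2 ≤ r) (p : ℝ) (hp : 0 < p) (hp1 : p < 1)
    (H : Finset (Finset (Fin n))) (hunif : UniformH r H) (hΔ : maxDeg H ≤ Δ) :
    ∑ F ∈ H.powerset.filter (fun F => Good F ∧ krC F = 1),
        (p⁻¹ - 1) ^ F.card * (4 * ((r - 1).factorial : ℝ) * Δ) ^ rpar r F *
          Real.exp 1 ^ (rpar r F + (r - 2) * krC F) /
          (n : ℝ) ^ (rpar r F + (r - 2) * krC F)
      ≤ (n : ℝ) * Real.exp (2 * r) *
        ∑ s ∈ Finset.Icc (r + 1) n,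
          (12 * ((r.factorial : ℝ)) ^ 2 * (Δ : ℝ) ^ 2 / (n : ℝ)) ^ (s - 1) *
            p ^ (-(eHmax H s : ℤ)) := by
  classical
  have hpinv1 : (1:ℝ) ≤ p⁻¹ := one_le_inv_iff₀.2 ⟨hp, hp1.le⟩
  have hq0 : (0:ℝ) ≤ p⁻¹ - 1 := by linarith
  have hpinv0 : (0:ℝ) ≤ p⁻¹ := by linarith
  have hrhs_nonneg : ∀ s : ℕ, (0:ℝ) ≤
      (12 * ((r.factorial : ℝ)) ^ 2 * (Δ : ℝ) ^ 2 / (n : ℝ)) ^ (s - 1) *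
        p ^ (-(eHmax H s : ℤ)) := by
    intro s
    have h1 : (0:ℝ) ≤ 12 * ((r.factorial : ℝ)) ^ 2 * (Δ : ℝ) ^ 2 / (n : ℝ) := by positivity
    exact mul_nonneg (pow_nonneg h1 _) (zpow_pos hp _).le
  set S := H.powerset.filter (fun F => Good F ∧ krC F = 1) with hSdef
  rcases Finset.eq_empty_or_nonempty S with hSemp | hSne
  · rw [hSemp, Finset.sum_empty]
    apply mul_nonneg (mul_nonneg (Nat.cast_nonneg n) (Real.exp_nonneg _))
    exact Finset.sum_nonneg (fun s _ => hrhs_nonneg s)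
  obtain ⟨F₀, hF₀⟩ := hSne
  obtain ⟨hF₀pow, hF₀good, hF₀k⟩ := Finset.mem_filter.1 hF₀
  have hF₀H : F₀ ⊆ H := Finset.mem_powerset.1 hF₀pow
  have hΔ1 : 1 ≤ Δ := by
    obtain ⟨v, hv⟩ := supp_nonempty_of_krC F₀ hF₀k
    obtain ⟨-, e, he, hve⟩ := Finset.mem_filter.1 hv
    have h1 : 1 ≤ (H.filter (fun e => v ∈ e)).card := by
      rw [Nat.one_le_iff_ne_zero, ← Nat.pos_iff_ne_zero, Finset.card_pos]
      exact ⟨e, Finset.mem_filter.2 ⟨hF₀H he, hve⟩⟩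
    have h2 : (H.filter (fun e => v ∈ e)).card ≤ maxDeg H :=
      Finset.le_sup (f := fun v => (H.filter (fun e => v ∈ e)).card) (Finset.mem_univ v)
    omega
  have hmaps : ∀ F ∈ S, (supp F).card ∈ Finset.Icc (r+1) n := by
    intro F hF
    obtain ⟨hFp, hFg, hFk⟩ := Finset.mem_filter.1 hF
    rw [Finset.mem_Icc]
    refine ⟨supp_card_ge H F hunif (Finset.mem_powerset.1 hFp) hFg hFk, ?_⟩
    calc (supp F).card ≤ (Finset.univ : Finset (Fin n)).card := Finset.card_le_univ _
      _ = n := by rw [Finset.card_univ, Fintype.card_fin]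
  rw [← Finset.sum_fiberwise_of_maps_to hmaps
    (fun F => (p⁻¹ - 1) ^ F.card * (4 * ((r - 1).factorial : ℝ) * Δ) ^ rpar r F *
      Real.exp 1 ^ (rpar r F + (r - 2) * krC F) / (n : ℝ) ^ (rpar r F + (r - 2) * krC F))]
  rw [Finset.mul_sum]
  apply Finset.sum_le_sum
  intro s hs
  obtain ⟨hs1, hs2⟩ := Finset.mem_Icc.1 hs
  set Ss := S.filter (fun F => (supp F).card = s) with hSs
  have hterm : ∀ F ∈ Ss,
      (p⁻¹ - 1) ^ F.card * (4 * ((r - 1).factorial : ℝ) * Δ) ^ rpar r F *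
        Real.exp 1 ^ (rpar r F + (r - 2) * krC F) / (n : ℝ) ^ (rpar r F + (r - 2) * krC F)
      = (p⁻¹ - 1) ^ F.card *
        ((4 * ((r - 1).factorial : ℝ) * Δ) ^ (s - (r-1)) * Real.exp 1 ^ (s-1) /
          (n : ℝ) ^ (s-1)) := by
    intro F hF
    obtain ⟨hFS, hFs⟩ := Finset.mem_filter.1 hF
    obtain ⟨hFp, hFg, hFk⟩ := Finset.mem_filter.1 hFS
    have hks := k1_add_supp F
    have hrpar : rpar r F = s - (r - 1) := by
      rw [rpar, hFk, mul_one]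
      omega
    have hexp : rpar r F + (r - 2) * krC F = s - 1 := by
      rw [hrpar, hFk, mul_one]
      omega
    rw [hexp, hrpar]
    ring
  rw [Finset.sum_congr rfl hterm, ← Finset.sum_mul]
  set Conn := Ss.image supp with hConn
  have hWfacts : ∀ W ∈ Conn, W.card = s ∧ (∀ x ∈ W, ∀ y ∈ W,
      Relation.ReflTransGen (fun a b => b ∈ W ∧
        b ∈ Finset.univ.filter (fun u => u ≠ a ∧ hAdj H a u)) x y) := by
    intro W hW
    obtain ⟨F, hF, hFW⟩ := Finset.mem_image.1 hW
    obtain ⟨hFS, hFs⟩ := Finset.mem_filter.1 hF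
    obtain ⟨hFp, hFg, hFk⟩ := Finset.mem_filter.1 hFS
    refine ⟨by rw [← hFW]; exact hFs, ?_⟩
    rw [← hFW]
    intro x hx y hy
    exact supp_conn' H F (Finset.mem_powerset.1 hFp) hFk x hx y hy
  have hcountN : Conn.card ≤ n * (4 ^ (s-1) * ((r-1)*Δ) ^ (s-1)) := by
    apply card_conn_le (fun v => Finset.univ.filter (fun u => u ≠ v ∧ hAdj H v u))
      ((r-1)*Δ) (s-1) (fun v => NH_card_le H hunif hΔ v) Conn
    intro W hW
    obtain ⟨hc, hconn⟩ := hWfacts W hW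
    exact ⟨by omega, hconn⟩
  have hinner : ∀ W ∈ Conn,
      ∑ F ∈ Ss.filter (fun F => supp F = W), (p⁻¹ - 1) ^ F.card
        ≤ (p⁻¹) ^ (eHmax H s) := by
    intro W hW
    obtain ⟨hWc, -⟩ := hWfacts W hW
    have hsub2 : Ss.filter (fun F => supp F = W) ⊆ (H.filter (fun e => e ⊆ W)).powerset := by
      intro F hF
      obtain ⟨hFSs, hFW⟩ := Finset.mem_filter.1 hF
      obtain ⟨hFS, -⟩ := Finset.mem_filter.1 hFSs
      obtain ⟨hFp, -, -⟩ := Finset.mem_filter.1 hFS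
      rw [Finset.mem_powerset]
      intro e he
      refine Finset.mem_filter.2 ⟨Finset.mem_powerset.1 hFp he, ?_⟩
      intro v hv
      rw [← hFW]
      exact Finset.mem_filter.2 ⟨Finset.mem_univ v, e, he, hv⟩
    calc ∑ F ∈ Ss.filter (fun F => supp F = W), (p⁻¹ - 1) ^ F.card
        ≤ ∑ F ∈ (H.filter (fun e => e ⊆ W)).powerset, (p⁻¹ - 1) ^ F.card :=
          Finset.sum_le_sum_of_subset_of_nonneg hsub2 (fun F _ _ => pow_nonneg hq0 _)
      _ = (1 + (p⁻¹ - 1)) ^ (H.filter (fun e => e ⊆ W)).card := sum_pow_card _ _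
      _ = (p⁻¹) ^ (H.filter (fun e => e ⊆ W)).card := by norm_num
      _ ≤ (p⁻¹) ^ (eHmax H s) := by
          apply pow_le_pow_right₀ hpinv1
          show (H.filter (fun e => e ⊆ W)).card ≤
            (Finset.powersetCard s (Finset.univ : Finset (Fin n))).sup
              (fun W => (H.filter (fun e => e ⊆ W)).card)
          exact Finset.le_sup (f := fun W => (H.filter (fun e => e ⊆ W)).card)
            (Finset.mem_powersetCard.2 ⟨Finset.subset_univ W, hWc⟩)
  have hfib2 : ∑ F ∈ Ss, (p⁻¹ - 1) ^ F.card
      = ∑ W ∈ Conn, ∑ F ∈ Ss.filter (fun F => supp F = W), (p⁻¹ - 1) ^ F.card :=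
    (Finset.sum_fiberwise_of_maps_to (fun F hF => Finset.mem_image_of_mem supp hF) _).symm
  have hsum_q : ∑ F ∈ Ss, (p⁻¹ - 1) ^ F.card
      ≤ ((n * (4 ^ (s-1) * ((r-1)*Δ) ^ (s-1)) : ℕ) : ℝ) * (p⁻¹) ^ (eHmax H s) := by
    rw [hfib2]
    calc ∑ W ∈ Conn, ∑ F ∈ Ss.filter (fun F => supp F = W), (p⁻¹ - 1) ^ F.card
        ≤ ∑ _W ∈ Conn, (p⁻¹) ^ (eHmax H s) := Finset.sum_le_sum hinner
      _ = (Conn.card : ℝ) * (p⁻¹) ^ (eHmax H s) := by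
          rw [Finset.sum_const, nsmul_eq_mul]
      _ ≤ _ := by
          apply mul_le_mul_of_nonneg_right _ (pow_nonneg hpinv0 _)
          exact_mod_cast hcountN
  have hCnn : (0:ℝ) ≤ (4 * ((r - 1).factorial : ℝ) * Δ) ^ (s - (r-1)) *
      Real.exp 1 ^ (s-1) / (n : ℝ) ^ (s-1) := by positivity
  have hPinv : p ^ (-(eHmax H s : ℤ)) = (p⁻¹) ^ (eHmax H s) := by
    rw [zpow_neg, zpow_natCast, ← inv_pow]
  rw [hPinv]
  have hstep := mul_le_mul_of_nonneg_right hsum_q hCnn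
  refine le_trans hstep ?_
  -- numeric core
  have hcore : (4 * ((r - 1).factorial : ℝ) * Δ) ^ (s - (r-1)) *
      ((4:ℝ) ^ (s-1) * (((r-1:ℕ):ℝ) * (Δ:ℝ)) ^ (s-1) * Real.exp 1 ^ (s-1))
      ≤ Real.exp (2*r) * (12 * ((r.factorial : ℝ)) ^ 2 * (Δ:ℝ) ^ 2) ^ (s-1) := by
    have hA1 : (1:ℝ) ≤ 4 * ((r - 1).factorial : ℝ) * Δ := by
      have h1 : (1:ℝ) ≤ ((r - 1).factorial : ℝ) := by
        exact_mod_cast Nat.one_le_iff_ne_zero.2 (Nat.factorial_ne_zero _)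
      have h2 : (1:ℝ) ≤ (Δ:ℝ) := by exact_mod_cast hΔ1
      nlinarith
    have h1 : (4 * ((r - 1).factorial : ℝ) * Δ) ^ (s - (r-1)) ≤
        (4 * ((r - 1).factorial : ℝ) * Δ) ^ (s-1) :=
      pow_le_pow_right₀ hA1 (by omega)
    have hbase : (4 * ((r - 1).factorial : ℝ) * Δ) *
        (4 * ((((r-1:ℕ)):ℝ) * Δ) * Real.exp 1)
        ≤ 12 * ((r.factorial : ℝ)) ^ 2 * (Δ:ℝ) ^ 2 := by
      have he3 : Real.exp 1 ≤ 3 := le_trans Real.exp_one_lt_d9.le (by norm_num)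
      have hcast : (4:ℝ) * (((r-1:ℕ):ℝ) * (((r-1).factorial):ℝ)) ≤ ((r.factorial):ℝ)^2 := by
        exact_mod_cast nat_core hr
      have hΔ0 : (0:ℝ) ≤ (Δ:ℝ) := Nat.cast_nonneg Δ
      have k1 : Real.exp 1 * (((r-1:ℕ):ℝ) * ((r-1).factorial:ℝ) * ((Δ:ℝ)*(Δ:ℝ)))
          ≤ 3 * (((r-1:ℕ):ℝ) * ((r-1).factorial:ℝ) * ((Δ:ℝ)*(Δ:ℝ))) :=
        mul_le_mul_of_nonneg_right he3 (by positivity)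
      have k2 : (4:ℝ) * (((r-1:ℕ):ℝ) * ((r-1).factorial:ℝ)) * ((Δ:ℝ)*(Δ:ℝ))
          ≤ ((r.factorial:ℝ))^2 * ((Δ:ℝ)*(Δ:ℝ)) :=
        mul_le_mul_of_nonneg_right hcast (by positivity)
      nlinarith [k1, k2]
    set X := 4 * ((r - 1).factorial : ℝ) * (Δ:ℝ) with hX
    set Y := ((r-1:ℕ):ℝ) * (Δ:ℝ) with hY
    have hX0 : (0:ℝ) ≤ X := by rw [hX]; positivity
    have hY0 : (0:ℝ) ≤ Y := by rw [hY]; positivity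
    have hrest0 : (0:ℝ) ≤ (4:ℝ) ^ (s-1) * Y ^ (s-1) * Real.exp 1 ^ (s-1) :=
      mul_nonneg (mul_nonneg (pow_nonneg (by norm_num) _) (pow_nonneg hY0 _))
        (pow_nonneg (Real.exp_pos 1).le _)
    calc X ^ (s - (r-1)) * ((4:ℝ) ^ (s-1) * Y ^ (s-1) * Real.exp 1 ^ (s-1))
        ≤ X ^ (s-1) * ((4:ℝ) ^ (s-1) * Y ^ (s-1) * Real.exp 1 ^ (s-1)) :=
          mul_le_mul_of_nonneg_right h1 hrest0
      _ = (X * (4 * Y * Real.exp 1)) ^ (s-1) := by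
          rw [mul_pow X (4 * Y * Real.exp 1), mul_pow (4 * Y) (Real.exp 1),
            mul_pow (4:ℝ) Y]
      _ ≤ (12 * ((r.factorial : ℝ)) ^ 2 * (Δ:ℝ) ^ 2) ^ (s-1) := by
          apply pow_le_pow_left₀ (mul_nonneg hX0 (by positivity)) ?_
          exact hbase
      _ ≤ Real.exp (2*r) * (12 * ((r.factorial : ℝ)) ^ 2 * (Δ:ℝ) ^ 2) ^ (s-1) := by
          apply le_mul_of_one_le_left (by positivity)
          apply Real.one_le_exp
          positivity
  have hfrac : (0:ℝ) ≤ (n:ℝ) * (p⁻¹) ^ (eHmax H s) / (n:ℝ) ^ (s-1) := by positivity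
  have hcnt : ((n * (4 ^ (s-1) * ((r-1)*Δ) ^ (s-1)) : ℕ) : ℝ)
      = (n:ℝ) * ((4:ℝ)^(s-1) * (((r-1:ℕ):ℝ) * (Δ:ℝ))^(s-1)) := by
    push_cast
    ring
  have hfinal := mul_le_mul_of_nonneg_right hcore hfrac
  calc ((n * (4 ^ (s-1) * ((r-1)*Δ) ^ (s-1)) : ℕ) : ℝ) * (p⁻¹) ^ (eHmax H s) *
        ((4 * ((r - 1).factorial : ℝ) * Δ) ^ (s - (r-1)) * Real.exp 1 ^ (s-1) /
          (n : ℝ) ^ (s-1))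
      = (4 * ((r - 1).factorial : ℝ) * Δ) ^ (s - (r-1)) *
          ((4:ℝ) ^ (s-1) * (((r-1:ℕ):ℝ) * (Δ:ℝ)) ^ (s-1) * Real.exp 1 ^ (s-1)) *
          ((n:ℝ) * (p⁻¹) ^ (eHmax H s) / (n:ℝ) ^ (s-1)) := by
        rw [hcnt]; ring
    _ ≤ Real.exp (2*r) * (12 * ((r.factorial : ℝ)) ^ 2 * (Δ:ℝ) ^ 2) ^ (s-1) *
          ((n:ℝ) * (p⁻¹) ^ (eHmax H s) / (n:ℝ) ^ (s-1)) := hfinal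
    _ = (n : ℝ) * Real.exp (2 * r) *
          ((12 * ((r.factorial : ℝ)) ^ 2 * (Δ : ℝ) ^ 2 / (n : ℝ)) ^ (s - 1) *
            (p⁻¹) ^ (eHmax H s)) := by
        rw [div_pow]
        ring
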